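/- Let X be a finite equilateral metric space with n = |X| points, all pairwise distances equal to 2C > 0. Then ae(X) = 2 − 2/n. -/

import Mathlib

noncomputable section

/-- The Lipschitz constant of a map (infimum of admissible constants). -/
def lipConst {α β : Type*} [PseudoEMetricSpace α] [PseudoEMetricSpace β] (f : α → β) : NNReal :=
  sInf {K : NNReal | LipschitzWith K f}

/-- The absolute extendability constant `ae(X)`: the least `K ≥ 0` such that for every
metric space `Y` containing `X` (isometrically), every Banach space `E`, and every
Lipschitz map `f : X → E`, the map `f` admits a `K·Lip(f)`-Lipschitz extension to `Y`. -/
def aeConst (X : Type) [MetricSpace X] : ℝ :=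
  sInf {K : ℝ | 0 ≤ K ∧ ∀ (Y : Type) [MetricSpace Y] (ι : X → Y), Isometry ι →
    ∀ (E : Type) [NormedAddCommGroup E] [NormedSpace ℝ E] [CompleteSpace E] (f : X → E),
      (∃ L, LipschitzWith L f) →
      ∃ g : Y → E, (∀ x : X, g (ι x) = f x) ∧ LipschitzWith (K.toNNReal * lipConst f) g}

/-- The non-linear extension modulus `ν(X,Y)` for a subset `X ⊆ Y`: the least `K ≥ 0`
such that every Lipschitz map from `X` into any Banach space admits a `K·Lip(f)`-Lipschitz
extension to `Y`. -/
def nuMod (Y : Type) [MetricSpace Y] (X : Set Y) : ℝ :=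
  sInf {K : ℝ | 0 ≤ K ∧ ∀ (E : Type) [NormedAddCommGroup E] [NormedSpace ℝ E]
    [CompleteSpace E] (f : ↥X → E), (∃ L, LipschitzWith L f) →
    ∃ g : Y → E, (∀ x : ↥X, g ↑x = f x) ∧ LipschitzWith (K.toNNReal * lipConst f) g}

end

noncomputable section AeAux

open Finset

/-- The set whose infimum defines `aeConst`. -/
def aeSet (X : Type) [MetricSpace X] : Set ℝ :=
  {K : ℝ | 0 ≤ K ∧ ∀ (Y : Type) [MetricSpace Y] (ι : X → Y), Isometry ι →
    ∀ (E : Type) [NormedAddCommGroup E] [NormedSpace ℝ E] [CompleteSpace E] (f : X → E),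
      (∃ L, LipschitzWith L f) →
      ∃ g : Y → E, (∀ x : X, g (ι x) = f x) ∧ LipschitzWith (K.toNNReal * lipConst f) g}

lemma aeConst_eq_sInf (X : Type) [MetricSpace X] : aeConst X = sInf (aeSet X) := rfl

/-- The infimum defining `lipConst` is attained. -/
lemma lipschitzWith_lipConst {α β : Type*} [MetricSpace α] [PseudoMetricSpace β]
    (f : α → β) (hf : ∃ L, LipschitzWith L f) : LipschitzWith (lipConst f) f := by
  obtain ⟨L, hL⟩ := hf
  apply LipschitzWith.of_dist_le_mul
  intro x y
  rcases eq_or_ne x y with rfl | hxy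
  · simp
  · have hd : 0 < dist x y := dist_pos.2 hxy
    have ht : Real.toNNReal (dist (f x) (f y) / dist x y) ≤ lipConst f := by
      apply le_csInf ⟨L, hL⟩
      intro K hK
      rw [Real.toNNReal_le_iff_le_coe, div_le_iff₀ hd]
      exact hK.dist_le_mul x y
    have h1 : dist (f x) (f y) / dist x y ≤ (lipConst f : ℝ) :=
      le_trans (Real.le_coe_toNNReal _) (by exact_mod_cast ht)
    calc dist (f x) (f y) = dist (f x) (f y) / dist x y * dist x y := by
          field_simp
      _ ≤ (lipConst f : ℝ) * dist x y := mul_le_mul_of_nonneg_right h1 hd.le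

lemma lipConst_le {α β : Type*} [PseudoEMetricSpace α] [PseudoEMetricSpace β] {f : α → β}
    {K : NNReal} (hf : LipschitzWith K f) : lipConst f ≤ K :=
  csInf_le (OrderBot.bddBelow _) hf

/-- distance for the one-point extension of `X`. -/
def optDist {X : Type} [MetricSpace X] (C : ℝ) : Option X → Option X → ℝ
  | some x, some y => dist x y
  | some _, none => C
  | none, some _ => C
  | none, none => 0

/-- metric space structure on `Option X`, adding a point at distance `C` from everything. -/
def optMetric (X : Type) [MetricSpace X] (C : ℝ) (hC : 0 < C)
    (h2 : ∀ x y : X, dist x y ≤ 2 * C) : MetricSpace (Option X) where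
  dist := optDist C
  dist_self := by rintro (_ | x) <;> simp [optDist]
  dist_comm := by rintro (_ | x) (_ | y) <;> simp [optDist, dist_comm]
  dist_triangle := by
    rintro (_ | x) (_ | y) (_ | z) <;>
      simp only [optDist] <;>
      [skip; skip; skip; skip; skip; skip; skip; skip] <;>
      first
        | linarith [hC.le]
        | linarith [dist_nonneg (x := x) (y := z), h2 x z]
        | linarith [dist_nonneg (x := y) (y := z)]
        | linarith [dist_nonneg (x := x) (y := y)]
        | exact dist_triangle x y z
  eq_of_dist_eq_zero := by
    rintro (_ | x) (_ | y) hd <;> simp only [optDist] at hd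
    · rfl
    · exact absurd hd (ne_of_lt hC).symm
    · exact absurd hd (ne_of_lt hC).symm
    · rw [eq_of_dist_eq_zero hd]

/-- Upper bound: `2 - 2/n` belongs to the defining set. -/
lemma equilateral_upper_mem {X : Type} [MetricSpace X] [Fintype X] [Nonempty X]
    (C : ℝ) (hC : 0 < C) (h : ∀ x y : X, x ≠ y → dist x y = 2 * C) :
    (2 - 2 / (Fintype.card X : ℝ)) ∈ aeSet X := by
  classical
  set n : ℕ := Fintype.card X with hdefn
  have hn1 : 1 ≤ n := Fintype.card_pos
  have hnR : (1 : ℝ) ≤ (n : ℝ) := by exact_mod_cast hn1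
  have hn0 : (0 : ℝ) < (n : ℝ) := by linarith
  have hK0 : 0 ≤ 2 - 2 / (n : ℝ) := by
    have : 2 / (n : ℝ) ≤ 2 := by rw [div_le_iff₀ hn0]; nlinarith
    linarith
  refine ⟨hK0, ?_⟩
  intro Y _ ι hι E _ _ _ f hf
  set L : ℝ := (lipConst f : ℝ) with hLdef
  have hL0 : 0 ≤ L := (lipConst f).coe_nonneg
  have hLip : LipschitzWith (lipConst f) f := lipschitzWith_lipConst f hf
  have hfd : ∀ x x' : X, ‖f x - f x'‖ ≤ 2 * C * L := by
    intro x x'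
    rcases eq_or_ne x x' with rfl | hne
    · simp only [sub_self, norm_zero]; positivity
    · have h1 := hLip.dist_le_mul x x'
      rw [dist_eq_norm, h x x' hne] at h1
      calc ‖f x - f x'‖ ≤ L * (2 * C) := h1
        _ = 2 * C * L := by ring
  set b : E := (n : ℝ)⁻¹ • ∑ x : X, f x with hb
  have hfb : ∀ x : X, ‖f x - b‖ ≤ (2 - 2 / (n : ℝ)) * C * L := by
    intro x
    have e1 : f x - b = (n : ℝ)⁻¹ • ∑ x' : X, (f x - f x') := by
      rw [Finset.sum_sub_distrib, Finset.sum_const, Finset.card_univ, smul_sub, hb]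
      rw [← hdefn, ← Nat.cast_smul_eq_nsmul ℝ, smul_smul, inv_mul_cancel₀ (ne_of_gt hn0),
        one_smul]
    have hsum : ∑ x' : X, ‖f x - f x'‖ ≤ ((n : ℝ) - 1) * (2 * C * L) := by
      rw [← Finset.add_sum_erase _ _ (Finset.mem_univ x)]
      have h1 : ‖f x - f x‖ = 0 := by simp
      have h2 : ∑ x' ∈ univ.erase x, ‖f x - f x'‖ ≤ ((n : ℝ) - 1) * (2 * C * L) := by
        calc ∑ x' ∈ univ.erase x, ‖f x - f x'‖
            ≤ (univ.erase x).card • (2 * C * L) :=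
              Finset.sum_le_card_nsmul _ _ _ (fun x' _ => hfd x x')
          _ = ((n : ℝ) - 1) * (2 * C * L) := by
              rw [Finset.card_erase_of_mem (mem_univ x), card_univ, nsmul_eq_mul, ← hdefn,
                Nat.cast_sub hn1, Nat.cast_one]
      linarith
    have e2 : ‖f x - b‖ ≤ (n : ℝ)⁻¹ * (((n : ℝ) - 1) * (2 * C * L)) := by
      rw [e1, norm_smul, Real.norm_eq_abs, abs_of_pos (by positivity : (0:ℝ) < (n:ℝ)⁻¹)]
      exact mul_le_mul_of_nonneg_left (le_trans (norm_sum_le _ _) hsum) (by positivity)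
    calc ‖f x - b‖ ≤ (n : ℝ)⁻¹ * (((n : ℝ) - 1) * (2 * C * L)) := e2
      _ = (2 - 2 / (n : ℝ)) * C * L := by field_simp
  -- partition-of-unity style bump functions
  set φ : X → Y → ℝ := fun x y => max 0 (1 - dist y (ι x) / C) with hφ
  have hφ0 : ∀ x y, 0 ≤ φ x y := fun _ _ => le_max_left _ _
  have hφlip : ∀ (x : X) (y y' : Y), |φ x y - φ x y'| ≤ dist y y' / C := by
    intro x y y'
    have h1 : |φ x y - φ x y'| ≤ |(1 - dist y (ι x) / C) - (1 - dist y' (ι x) / C)| := by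
      rw [hφ]
      simp only [max_comm (0:ℝ)]
      exact abs_max_sub_max_le_abs _ _ _
    have h2 : (1 - dist y (ι x) / C) - (1 - dist y' (ι x) / C)
        = (dist y' (ι x) - dist y (ι x)) / C := by ring
    rw [h2] at h1
    refine h1.trans ?_
    rw [abs_div, abs_of_pos hC]
    have h5 : |dist y' (ι x) - dist y (ι x)| ≤ dist y y' := by
      calc |dist y' (ι x) - dist y (ι x)| ≤ dist y' y := abs_dist_sub_le _ _ _
        _ = dist y y' := dist_comm _ _
    gcongr
  have hφzero : ∀ (x : X) (y : Y), C ≤ dist y (ι x) → φ x y = 0 := by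
    intro x y hd
    rw [hφ]
    apply max_eq_left
    have : 1 ≤ dist y (ι x) / C := (one_le_div hC).2 hd
    linarith
  have hsep : ∀ (x x' : X) (y : Y), x ≠ x' → dist y (ι x) < C → C ≤ dist y (ι x') := by
    intro x x' y hne hd
    have h1 : dist (ι x) (ι x') = 2 * C := by rw [hι.dist_eq]; exact h x x' hne
    have h2 := dist_triangle (ι x) y (ι x')
    have h3 : dist (ι x) y = dist y (ι x) := dist_comm _ _
    linarith
  have hφeq : ∀ (x : X) (y : Y), dist y (ι x) < C → φ x y = 1 - dist y (ι x) / C := by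
    intro x y hd
    rw [hφ]
    apply max_eq_right
    have : dist y (ι x) / C < 1 := (div_lt_one hC).2 hd
    linarith
  -- key estimate : total variation of the bumps
  have main : ∀ y y' : Y, ∀ a : X, dist y (ι a) < C →
      ∑ x : X, |φ x y - φ x y'| ≤ dist y y' / C := by
    intro y y' a ha
    by_cases hy' : ∃ a', dist y' (ι a') < C
    · obtain ⟨a', ha'⟩ := hy'
      rcases eq_or_ne a a' with rfl | hne
      · have hs : ∑ x : X, |φ x y - φ x y'| = |φ a y - φ a y'| := by
          apply Finset.sum_eq_single_of_mem a (mem_univ a)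
          intro x _ hxa
          have z1 : φ x y = 0 := hφzero x y (hsep a x y (Ne.symm hxa) ha)
          have z2 : φ x y' = 0 := hφzero x y' (hsep a x y' (Ne.symm hxa) ha')
          simp [z1, z2]
        rw [hs]; exact hφlip a y y'
      · have z_ay' : φ a y' = 0 := hφzero a y' (hsep a' a y' (Ne.symm hne) ha')
        have z_a'y : φ a' y = 0 := hφzero a' y (hsep a a' y hne ha)
        have hs : ∑ x : X, |φ x y - φ x y'| = |φ a y - φ a y'| + |φ a' y - φ a' y'| := by
          apply Finset.sum_eq_add_of_mem a a' (mem_univ _) (mem_univ _) hne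
          intro c _ hc
          have z1 : φ c y = 0 := hφzero c y (hsep a c y (Ne.symm hc.1) ha)
          have z2 : φ c y' = 0 := hφzero c y' (hsep a' c y' (Ne.symm hc.2) ha')
          simp [z1, z2]
        rw [hs, z_ay', z_a'y, sub_zero, zero_sub, abs_neg, abs_of_nonneg (hφ0 _ _),
          abs_of_nonneg (hφ0 _ _)]
        rw [hφeq a y ha, hφeq a' y' ha']
        have h1 : dist (ι a) (ι a') = 2 * C := by rw [hι.dist_eq]; exact h a a' hne
        have t1 := dist_triangle (ι a) y' (ι a')
        have t2 := dist_triangle (ι a) y y'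
        have h3 : dist (ι a) y = dist y (ι a) := dist_comm _ _
        have h4 : dist y' (ι a') = dist (ι a') y' := dist_comm _ _
        rw [le_div_iff₀ hC]
        have e5 : (1 - dist y (ι a) / C + (1 - dist y' (ι a') / C)) * C
            = 2 * C - dist y (ι a) - dist y' (ι a') := by
          field_simp
          ring
        rw [e5]
        linarith
    · push_neg at hy'
      have hz' : ∀ x, φ x y' = 0 := fun x => hφzero x y' (hy' x)
      have hs : ∑ x : X, |φ x y - φ x y'| = |φ a y - φ a y'| := by
        apply Finset.sum_eq_single_of_mem a (mem_univ a)
        intro x _ hxa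
        have z1 : φ x y = 0 := hφzero x y (hsep a x y (Ne.symm hxa) ha)
        simp [z1, hz' x]
      rw [hs, hz' a, sub_zero, abs_of_nonneg (hφ0 _ _), hφeq a y ha]
      have t := dist_triangle y' y (ι a)
      have h5 := hy' a
      rw [le_div_iff₀ hC]
      have hyy' : dist y' y = dist y y' := dist_comm _ _
      have e6 : (1 - dist y (ι a) / C) * C = C - dist y (ι a) := by
        field_simp
      rw [e6]
      linarith
  have hkey : ∀ y y' : Y, ∑ x : X, |φ x y - φ x y'| ≤ dist y y' / C := by
    intro y y'
    by_cases hy : ∃ a, dist y (ι a) < C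
    · obtain ⟨a, ha⟩ := hy
      exact main y y' a ha
    · by_cases hy' : ∃ a', dist y' (ι a') < C
      · obtain ⟨a', ha'⟩ := hy'
        have := main y' y a' ha'
        simpa [abs_sub_comm, dist_comm] using this
      · push_neg at hy hy'
        have : ∀ x : X, |φ x y - φ x y'| = 0 := by
          intro x
          rw [hφzero x y (hy x), hφzero x y' (hy' x)]
          simp
        rw [Finset.sum_congr rfl (fun x _ => this x), Finset.sum_const, smul_zero]
        positivity
  -- the extension
  set g : Y → E := fun y => b + ∑ x : X, φ x y • (f x - b) with hgdef
  refine ⟨g, ?_, ?_⟩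
  · intro x
    have hs : ∑ x' : X, φ x' (ι x) • (f x' - b) = f x - b := by
      rw [Finset.sum_eq_single_of_mem x (mem_univ x)]
      · have : φ x (ι x) = 1 := by
          rw [hφ]; simp [dist_self]
        rw [this, one_smul]
      · intro x' _ hxx'
        have h1 : dist (ι x) (ι x') = 2 * C := by rw [hι.dist_eq]; exact h x x' (Ne.symm hxx')
        have : φ x' (ι x) = 0 := by
          apply hφzero
          rw [h1]; linarith
        rw [this, zero_smul]
    rw [hgdef]
    simp only []
    rw [hs, add_sub_cancel]
  · apply LipschitzWith.of_dist_le_mul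
    intro y y'
    have coeK : (((2 - 2 / (n : ℝ)).toNNReal * lipConst f : NNReal) : ℝ)
        = (2 - 2 / (n : ℝ)) * L := by
      push_cast
      rw [Real.coe_toNNReal _ hK0]
    rw [dist_eq_norm, coeK]
    have e : g y - g y' = ∑ x : X, (φ x y - φ x y') • (f x - b) := by
      rw [hgdef]
      simp only []
      rw [add_sub_add_left_eq_sub, ← Finset.sum_sub_distrib]
      congr 1
      funext x
      rw [sub_smul]
    rw [e]
    have hM : 0 ≤ (2 - 2 / (n : ℝ)) * C * L := by positivity
    calc ‖∑ x : X, (φ x y - φ x y') • (f x - b)‖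
        ≤ ∑ x : X, ‖(φ x y - φ x y') • (f x - b)‖ := norm_sum_le _ _
      _ ≤ ∑ x : X, |φ x y - φ x y'| * ((2 - 2 / (n : ℝ)) * C * L) := by
          apply Finset.sum_le_sum
          intro x _
          rw [norm_smul, Real.norm_eq_abs]
          exact mul_le_mul_of_nonneg_left (hfb x) (abs_nonneg _)
      _ = (∑ x : X, |φ x y - φ x y'|) * ((2 - 2 / (n : ℝ)) * C * L) :=
          (Finset.sum_mul _ _ _).symm
      _ ≤ (dist y y' / C) * ((2 - 2 / (n : ℝ)) * C * L) :=
          mul_le_mul_of_nonneg_right (hkey y y') hM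
      _ = (2 - 2 / (n : ℝ)) * L * dist y y' := by field_simp

/-- Lower bound: every element of the defining set is at least `2 - 2/n`. -/
lemma equilateral_lower {X : Type} [MetricSpace X] [Fintype X] [Nonempty X]
    (C : ℝ) (hC : 0 < C) (h : ∀ x y : X, x ≠ y → dist x y = 2 * C) :
    ∀ K ∈ aeSet X, 2 - 2 / (Fintype.card X : ℝ) ≤ K := by
  classical
  intro K hK
  obtain ⟨hK0, hKe⟩ := hK
  set n : ℕ := Fintype.card X with hdefn
  have hn1 : 1 ≤ n := Fintype.card_pos
  rcases eq_or_lt_of_le hn1 with hn | hn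
  · rw [← hn]
    simpa using hK0
  · have hnR : (2 : ℝ) ≤ (n : ℝ) := by exact_mod_cast hn
    have hn0 : (0 : ℝ) < (n : ℝ) := by linarith
    have h2 : ∀ x y : X, dist x y ≤ 2 * C := by
      intro x y
      rcases eq_or_ne x y with rfl | hne
      · rw [dist_self]; positivity
      · rw [h x y hne]
    letI : MetricSpace (Option X) := optMetric X C hC h2
    have hisom : Isometry (some : X → Option X) := Isometry.of_dist_eq fun x y => rfl
    -- the target Banach space: mean-zero vectors in `ℓ¹(X)`
    let sumF : PiLp 1 (fun _ : X => ℝ) →ₗ[ℝ] ℝ :=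
      { toFun := fun w => ∑ x, w x
        map_add' := fun w w' => by simp [Finset.sum_add_distrib]
        map_smul' := fun c w => by simp [Finset.mul_sum] }
    set H : Submodule ℝ (PiLp 1 (fun _ : X => ℝ)) := LinearMap.ker sumF with hH
    haveI : CompleteSpace ↥H := FiniteDimensional.complete ℝ _
    have normV : ∀ w : PiLp 1 (fun _ : X => ℝ), ‖w‖ = ∑ x, |w x| := by
      intro w
      rw [PiLp.norm_eq_sum (by norm_num : 0 < (1 : ENNReal).toReal)]
      simp
    set uvec : X → PiLp 1 (fun _ : X => ℝ) :=
      fun x => WithLp.toLp 1 (fun y => (if y = x then (1 : ℝ) else 0) - (n : ℝ)⁻¹) with huvec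
    have husum : ∀ x : X, ∑ y : X, uvec x y = 0 := by
      intro x
      have e : ∑ y : X, uvec x y
          = (∑ y : X, (if y = x then (1 : ℝ) else 0)) - (n : ℝ) * (n : ℝ)⁻¹ := by
        rw [huvec]
        rw [Finset.sum_sub_distrib, Finset.sum_const, Finset.card_univ, nsmul_eq_mul, ← hdefn]
      rw [e, Finset.sum_ite_eq' Finset.univ x (fun _ => (1 : ℝ))]
      simp [mul_inv_cancel₀ (ne_of_gt hn0)]
    have humem : ∀ x : X, C • uvec x ∈ H := by
      intro x
      rw [hH, LinearMap.mem_ker]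
      have e : sumF (C • uvec x) = C * ∑ y, uvec x y := by
        simp only [sumF, LinearMap.coe_mk, AddHom.coe_mk]
        rw [Finset.mul_sum]
        exact Finset.sum_congr rfl fun y _ => rfl
      rw [e, husum, mul_zero]
    set fE : X → ↥H := fun x => ⟨C • uvec x, humem x⟩ with hfE
    have hdistfE : ∀ x x' : X, x ≠ x' →
        ‖(fE x : PiLp 1 (fun _ : X => ℝ)) - fE x'‖ = 2 * C := by
      intro x x' hne
      rw [normV]
      have e : ∀ y : X, |((fE x : PiLp 1 (fun _ : X => ℝ)) - fE x') y|
          = C * ((if y = x then (1 : ℝ) else 0) + (if y = x' then 1 else 0)) := by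
        intro y
        have e1 : ((fE x : PiLp 1 (fun _ : X => ℝ)) - fE x') y
            = C * ((if y = x then (1 : ℝ) else 0) - if y = x' then 1 else 0) := by
          show C * uvec x y - C * uvec x' y = _
          rw [huvec]
          simp only []
          ring
        rw [e1, abs_mul, abs_of_pos hC]
        congr 1
        by_cases h1 : y = x
        · have h3 : ¬ y = x' := by rw [h1]; exact hne
          simp [h1, h3, hne]
        · by_cases h3 : y = x'
          · simp [h1, h3, Ne.symm hne]
          · simp [h1, h3, hne]
      rw [Finset.sum_congr rfl fun y _ => e y, ← Finset.mul_sum, Finset.sum_add_distrib,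
        Finset.sum_ite_eq' Finset.univ x (fun _ => (1 : ℝ)),
        Finset.sum_ite_eq' Finset.univ x' (fun _ => (1 : ℝ))]
      simp only [Finset.mem_univ, if_pos]
      ring
    have hlip1 : LipschitzWith 1 fE := by
      apply LipschitzWith.of_dist_le_mul
      intro x x'
      rcases eq_or_ne x x' with rfl | hne
      · simp
      · have e : dist (fE x) (fE x') = 2 * C := by
          rw [dist_eq_norm]
          have e2 : ‖fE x - fE x'‖ = ‖(fE x : PiLp 1 (fun _ : X => ℝ)) - fE x'‖ := rfl
          rw [e2]
          exact hdistfE x x' hne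
        rw [e, h x x' hne]
        simp
    obtain ⟨g, hg1, hg2⟩ := hKe (Option X) some hisom (↥H) fE ⟨1, hlip1⟩
    set c : ↥H := g none with hc
    have hcsum : ∑ y : X, (c : PiLp 1 (fun _ : X => ℝ)) y = 0 := by
      have hmem : (c : PiLp 1 (fun _ : X => ℝ)) ∈ LinearMap.ker sumF := c.2
      rw [LinearMap.mem_ker] at hmem
      exact hmem
    have hH2 : ∀ w : PiLp 1 (fun _ : X => ℝ), (∑ y, w y = 0) → ∀ x, 2 * |w x| ≤ ‖w‖ := by
      intro w hw x
      rw [normV, ← Finset.add_sum_erase _ _ (Finset.mem_univ x)]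
      have h4 := Finset.add_sum_erase Finset.univ w (Finset.mem_univ x)
      rw [hw] at h4
      have h5 : |w x| ≤ ∑ y ∈ Finset.univ.erase x, |w y| := by
        have e : ∑ y ∈ Finset.univ.erase x, w y = - w x := by linarith
        rw [← abs_neg (w x), ← e]
        exact Finset.abs_sum_le_sum_abs _ _
      linarith
    have key : ∃ x : X, (2 - 2 / (n : ℝ)) * C ≤ dist c (fE x) := by
      by_contra hcon
      push_neg at hcon
      have hlb : ∀ x : X,
          2 * ((1 - (n : ℝ)⁻¹) * C - (c : PiLp 1 (fun _ : X => ℝ)) x) ≤ dist c (fE x) := by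
        intro x
        have hw : ∑ y, ((c : PiLp 1 (fun _ : X => ℝ)) - fE x) y = 0 := by
          have e : ∀ y, ((c : PiLp 1 (fun _ : X => ℝ)) - fE x) y
              = (c : PiLp 1 (fun _ : X => ℝ)) y - C * uvec x y := fun _ => rfl
          rw [Finset.sum_congr rfl fun y _ => e y, Finset.sum_sub_distrib, hcsum,
            ← Finset.mul_sum, husum, mul_zero, sub_zero]
        have h6 := hH2 _ hw x
        have e7 : ((c : PiLp 1 (fun _ : X => ℝ)) - fE x) x
            = (c : PiLp 1 (fun _ : X => ℝ)) x - C * (1 - (n : ℝ)⁻¹) := by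
          show (c : PiLp 1 (fun _ : X => ℝ)) x - C * uvec x x = _
          rw [huvec]
          simp
        have h8 : dist c (fE x) = ‖(c : PiLp 1 (fun _ : X => ℝ)) - fE x‖ := by
          rw [dist_eq_norm]
          rfl
        rw [h8]
        refine le_trans ?_ h6
        rw [e7]
        have h9 := neg_le_abs ((c : PiLp 1 (fun _ : X => ℝ)) x - C * (1 - (n : ℝ)⁻¹))
        nlinarith
      have hsum1 := Finset.sum_le_sum fun x (_ : x ∈ Finset.univ) => hlb x
      have hsum2 : ∑ x : X, dist c (fE x) < ∑ x : X, (2 - 2 / (n : ℝ)) * C :=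
        Finset.sum_lt_sum_of_nonempty Finset.univ_nonempty fun x _ => hcon x
      have e8 : ∑ x : X, 2 * ((1 - (n : ℝ)⁻¹) * C - (c : PiLp 1 (fun _ : X => ℝ)) x)
          = (n : ℝ) * (2 * (1 - (n : ℝ)⁻¹) * C) := by
        have e : ∀ x : X, 2 * ((1 - (n : ℝ)⁻¹) * C - (c : PiLp 1 (fun _ : X => ℝ)) x)
            = 2 * (1 - (n : ℝ)⁻¹) * C - 2 * (c : PiLp 1 (fun _ : X => ℝ)) x := fun x => by ring
        rw [Finset.sum_congr rfl fun x _ => e x, Finset.sum_sub_distrib,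
          Finset.sum_const, Finset.card_univ, ← hdefn, nsmul_eq_mul]
        have e2 : ∑ x : X, 2 * (c : PiLp 1 (fun _ : X => ℝ)) x
            = 2 * ∑ x : X, (c : PiLp 1 (fun _ : X => ℝ)) x := by
          rw [Finset.mul_sum]
        rw [e2, hcsum, mul_zero, sub_zero]
      have e9 : ∑ x : X, (2 - 2 / (n : ℝ)) * C = (n : ℝ) * ((2 - 2 / (n : ℝ)) * C) := by
        rw [Finset.sum_const, Finset.card_univ, ← hdefn, nsmul_eq_mul]
      rw [e8] at hsum1
      rw [e9] at hsum2
      have e10 : (n : ℝ) * (2 * (1 - (n : ℝ)⁻¹) * C) = (n : ℝ) * ((2 - 2 / (n : ℝ)) * C) := by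
        rw [div_eq_mul_inv]
        ring
      linarith
    obtain ⟨x, hx⟩ := key
    have hgd := hg2.dist_le_mul none (some x)
    rw [hg1 x] at hgd
    have hdn : dist (none : Option X) (some x) = C := rfl
    rw [hdn] at hgd
    have hlipc : (lipConst fE : ℝ) ≤ 1 := by exact_mod_cast lipConst_le hlip1
    have hKcoe : ((K.toNNReal * lipConst fE : NNReal) : ℝ) = K * (lipConst fE : ℝ) := by
      push_cast
      rw [Real.coe_toNNReal _ hK0]
    rw [hKcoe] at hgd
    have h10 : dist c (fE x) ≤ K * C := by
      refine le_trans hgd ?_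
      have h11 : K * (lipConst fE : ℝ) * C ≤ K * 1 * C := by
        apply mul_le_mul_of_nonneg_right _ hC.le
        exact mul_le_mul_of_nonneg_left hlipc hK0
      linarith
    have h12 := le_trans hx h10
    exact le_of_mul_le_mul_right h12 hC


end AeAux

/-- if `X` is a finite metric space with `n ≥ 1` points and all pairwise
distances equal to `2C > 0`, then `ae(X) = 2 - 2/n`. -/
theorem aeConst_equilateral (X : Type) [MetricSpace X] [Fintype X] [Nonempty X]
    (C : ℝ) (hC : 0 < C) (h : ∀ x y : X, x ≠ y → dist x y = 2 * C)
    (n : ℕ) (hn : Fintype.card X = n) :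
    aeConst X = 2 - 2 / (n : ℝ) := by
  subst hn
  rw [aeConst_eq_sInf]
  apply le_antisymm
  · exact csInf_le ⟨2 - 2 / (Fintype.card X : ℝ), fun K hK => equilateral_lower C hC h K hK⟩
      (equilateral_upper_mem C hC h)
  · exact le_csInf ⟨_, equilateral_upper_mem C hC h⟩ (equilateral_lower C hC h)
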